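/- There exists a commutative ring K and a 2-step nilpotent K-module (M, M₀) that is not universal, i.e., for which some scalar extension is not well-defined. Concretely, take K = ℤ[√2], M̃ = K ∔ K the split 2-step nilpotent K-module with 2-cocycle b(x, y) = xy, and M = M̃/A where A is the K^•-invariant subgroup generated by (√2, 1); then the natural map 𝔽₂ ⊗_K M₀ → M ⊠_K 𝔽₂ is the zero map (hence not injective), because (1, √2)·√2 = (0, 1) in M. -/

import Mathlib

/-- A 2-step nilpotent `K`-module `(M, M₀)`: `M` is a group (operation `mul`, written
multiplicatively, with the group structure given explicitly), `M₀` a central subgroup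
realized by an injective homomorphism `ι` from a `K`-module, with commutator map
`comm`, a unital right action `act` of the multiplicative monoid `K^•` by
endomorphisms, and a map `τ : M → M₀` satisfying the axioms of the paper. -/
structure TwoStepNilMod (K M M₀ : Type*) [CommRing K] [AddCommGroup M₀]
    [Module K M₀] where
  mul : M → M → M
  one : M
  inv : M → M
  mul_assoc : ∀ a b c, mul (mul a b) c = mul a (mul b c)
  one_mul : ∀ a, mul one a = a
  inv_mul : ∀ a, mul (inv a) a = one
  ι : M₀ → M
  ι_inj : Function.Injective ι
  ι_hom : ∀ v w, ι (v + w) = mul (ι v) (ι w)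
  central : ∀ v m, mul (ι v) m = mul m (ι v)
  comm : M → M → M₀
  comm_spec : ∀ m m', mul m m' = mul (ι (comm m m')) (mul m' m)
  act : M → K → M
  act_one : ∀ m, act m 1 = m
  act_act : ∀ m k k', act (act m k) k' = act m (k * k')
  act_hom : ∀ m m' k, act (mul m m') k = mul (act m k) (act m' k)
  comm_act : ∀ m m' k k', comm (act m k) (act m' k') = (k * k') • comm m m'
  τ : M → M₀
  act_add : ∀ m k k', act m (k + k') = mul (act m k) (mul (ι ((k * k') • τ m)) (act m k'))
  act_ι : ∀ v k, act (ι v) k = ι ((k * k) • v)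

open scoped TensorProduct commutatorElement

/-- The defining relations of the scalar extension `M ⊠_K E` of a 2-step nilpotent
`K`-module `(M, M₀)` along `K → E`: generators are the elements of `E ⊗_K M₀`
(via `Sum.inl`) and the symbols `m ⊠ e` (via `Sum.inr (m, e)`). -/
def boxRels {K M M₀ : Type} [CommRing K] [AddCommGroup M₀] [Module K M₀]
    (T : TwoStepNilMod K M M₀) (E : Type) [CommRing E] [Algebra K E] :
    Set (FreeGroup ((E ⊗[K] M₀) ⊕ (M × E))) :=
  {w | (∃ x y : E ⊗[K] M₀,
          w = FreeGroup.of (Sum.inl x) * FreeGroup.of (Sum.inl y) *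
              (FreeGroup.of (Sum.inl (x + y)))⁻¹)
    ∨ (∃ (m : M) (e : E) (x : E ⊗[K] M₀),
          w = ⁅(FreeGroup.of (Sum.inr (m, e)) : FreeGroup ((E ⊗[K] M₀) ⊕ (M × E))),
              FreeGroup.of (Sum.inl x)⁆)
    ∨ (∃ (m m' : M) (e e' : E),
          w = ⁅(FreeGroup.of (Sum.inr (m, e)) : FreeGroup ((E ⊗[K] M₀) ⊕ (M × E))),
              FreeGroup.of (Sum.inr (m', e'))⁆ *
              (FreeGroup.of (Sum.inl ((e * e') ⊗ₜ[K] T.comm m m')))⁻¹)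
    ∨ (∃ (m m' : M) (e : E),
          w = FreeGroup.of (Sum.inr (T.mul m m', e)) *
              (FreeGroup.of (Sum.inr (m, e)) * FreeGroup.of (Sum.inr (m', e)))⁻¹)
    ∨ (∃ (m : M) (k : K) (e : E),
          w = FreeGroup.of (Sum.inr (T.act m k, e)) *
              (FreeGroup.of (Sum.inr (m, algebraMap K E k * e)))⁻¹)
    ∨ (∃ (m : M) (e e' : E),
          w = FreeGroup.of (Sum.inr (m, e + e')) *
              (FreeGroup.of (Sum.inr (m, e)) *
               FreeGroup.of (Sum.inl ((e * e') ⊗ₜ[K] T.τ m)) *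
               FreeGroup.of (Sum.inr (m, e')))⁻¹)
    ∨ (∃ (v : M₀) (e : E),
          w = FreeGroup.of (Sum.inr (T.ι v, e)) *
              (FreeGroup.of (Sum.inl ((e * e) ⊗ₜ[K] v)))⁻¹)}


section Aux

variable {α : Type*}

private lemma myMkRelOne {rels : Set (FreeGroup α)} {r : FreeGroup α} (h : r ∈ rels) :
    PresentedGroup.mk rels r = 1 := by
  have : r ∈ Subgroup.normalClosure rels := Subgroup.subset_normalClosure h
  exact (QuotientGroup.eq_one_iff r).mpr this

end Aux

/-- There is a commutative ring `K` and a 2-step nilpotent `K`-module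
that is not universal. Concretely, take `K = ℤ[√2]`, `M̃ = K ∔ K` the split 2-step
nilpotent `K`-module with cocycle `b(x,y) = xy`, and `M = M̃/A` where `A` is the
`K^•`-invariant subgroup generated by `(√2, 1)` (so `A = {(k√2, k²)}`). Then the
natural map `𝔽₂ ⊗_K M₀ → M ⊠_K 𝔽₂` is the zero map, hence not injective
(`𝔽₂ ⊗_K M₀ ≠ 0`). Here `M` is encoded by a surjection `p : K × K → M` realizing
the quotient by `A`, and `M ⊠_K 𝔽₂` by the presented group on `boxRels`. -/
theorem stmt_11 [Algebra (Zsqrtd 2) (ZMod 2)] {M : Type}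
    (T : TwoStepNilMod (Zsqrtd 2) M (Zsqrtd 2))
    (p : Zsqrtd 2 × Zsqrtd 2 → M)
    (hsurj : Function.Surjective p)
    (hmul : ∀ x y : Zsqrtd 2 × Zsqrtd 2,
      p (x.1 + y.1, x.2 + x.1 * y.1 + y.2) = T.mul (p x) (p y))
    (hact : ∀ (x : Zsqrtd 2 × Zsqrtd 2) (k : Zsqrtd 2),
      p (k * x.1, k * k * x.2) = T.act (p x) k)
    (hι : ∀ a : Zsqrtd 2, T.ι a = p (0, a))
    (hτ : ∀ x : Zsqrtd 2 × Zsqrtd 2, T.τ (p x) = 2 * x.2 - x.1 * x.1)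
    (hker : ∀ x y : Zsqrtd 2 × Zsqrtd 2, p x = p y ↔
      ∃ k : Zsqrtd 2, y.1 = x.1 + k * Zsqrtd.sqrtd ∧
        y.2 = x.2 + x.1 * (k * Zsqrtd.sqrtd) + k * k) :
    (∃ z : (ZMod 2) ⊗[Zsqrtd 2] (Zsqrtd 2), z ≠ 0) ∧
    ∀ x : (ZMod 2) ⊗[Zsqrtd 2] (Zsqrtd 2),
      (PresentedGroup.of (Sum.inl x) : PresentedGroup (boxRels T (ZMod 2))) = 1 := by
  constructor
  · refine ⟨(1 : ZMod 2) ⊗ₜ[Zsqrtd 2] (1 : Zsqrtd 2), fun h => ?_⟩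
    have := congrArg (TensorProduct.rid (Zsqrtd 2) (ZMod 2)) h
    simp only [TensorProduct.rid_tmul, one_smul, map_zero] at this
    exact one_ne_zero this
  · have key : ∀ r ∈ boxRels T (ZMod 2),
        PresentedGroup.mk (boxRels T (ZMod 2)) r = 1 := fun r hr => myMkRelOne hr
    set mk := PresentedGroup.mk (boxRels T (ZMod 2)) with hmk
    have hof : ∀ a, (PresentedGroup.of a : PresentedGroup (boxRels T (ZMod 2))) =
        mk (FreeGroup.of a) := fun a => rfl
    -- additivity on the M₀ part
    have hadd : ∀ x y : (ZMod 2) ⊗[Zsqrtd 2] (Zsqrtd 2),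
        mk (FreeGroup.of (Sum.inl (x + y))) =
          mk (FreeGroup.of (Sum.inl x)) * mk (FreeGroup.of (Sum.inl y)) := by
      intro x y
      have h := key _ (Or.inl ⟨x, y, rfl⟩)
      rw [map_mul, map_mul, map_inv, mul_inv_eq_one] at h
      exact h.symm
    have z0 : mk (FreeGroup.of (Sum.inl (0 : (ZMod 2) ⊗[Zsqrtd 2] (Zsqrtd 2)))) = 1 := by
      have h := hadd 0 0
      rw [add_zero] at h
      exact (right_eq_mul.mp h)
    -- algebraMap kills sqrtd
    have hs : algebraMap (Zsqrtd 2) (ZMod 2) Zsqrtd.sqrtd = 0 := by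
      have h2 : algebraMap (Zsqrtd 2) (ZMod 2) Zsqrtd.sqrtd *
          algebraMap (Zsqrtd 2) (ZMod 2) Zsqrtd.sqrtd = 0 := by
        rw [← map_mul, Zsqrtd.dmuld]
        have : ((2 : ℤ) : Zsqrtd 2) = (2 : Zsqrtd 2) := by push_cast; ring
        rw [this, map_ofNat]
        decide
      revert h2
      generalize algebraMap (Zsqrtd 2) (ZMod 2) Zsqrtd.sqrtd = s
      revert s; decide
    have tm : ∀ v : Zsqrtd 2, ((1 : ZMod 2) ⊗ₜ[Zsqrtd 2] v) =
        (algebraMap (Zsqrtd 2) (ZMod 2) v) ⊗ₜ[Zsqrtd 2] (1 : Zsqrtd 2) := by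
      intro v
      rw [Algebra.algebraMap_eq_smul_one, TensorProduct.smul_tmul, smul_eq_mul, mul_one]
    set m : M := p (1, Zsqrtd.sqrtd) with hm
    -- m ⊠ 0 = 1
    have h0 : mk (FreeGroup.of (Sum.inr (m, (0 : ZMod 2)))) = 1 := by
      have h := key _ (Or.inr <| Or.inr <| Or.inr <| Or.inr <| Or.inr <| Or.inl
        ⟨m, 0, 0, rfl⟩)
      rw [map_mul, map_inv, map_mul, map_mul, mul_inv_eq_one] at h
      rw [add_zero] at h
      have hz : ((0 : ZMod 2) * 0) ⊗ₜ[Zsqrtd 2] T.τ m =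
          (0 : (ZMod 2) ⊗[Zsqrtd 2] (Zsqrtd 2)) := by
        rw [zero_mul, TensorProduct.zero_tmul]
      rw [hz, z0, mul_one] at h
      exact left_eq_mul.mp h
    -- act relation: m ⊠ sqrtd·1 = m ⊠ 0
    have h5 : mk (FreeGroup.of (Sum.inr (T.act m Zsqrtd.sqrtd, (1 : ZMod 2)))) = 1 := by
      have h := key _ (Or.inr <| Or.inr <| Or.inr <| Or.inr <| Or.inl
        ⟨m, Zsqrtd.sqrtd, 1, rfl⟩)
      rw [map_mul, map_inv, mul_inv_eq_one] at h
      rw [hs, zero_mul] at h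
      rw [h, h0]
    -- identify act m sqrtd with an ι element
    have hd : (Zsqrtd.sqrtd : Zsqrtd 2) * Zsqrtd.sqrtd = 2 := by
      rw [Zsqrtd.dmuld]; push_cast; ring
    have hact2 : T.act m Zsqrtd.sqrtd = T.ι (2 * Zsqrtd.sqrtd - 1) := by
      rw [hι, hm, ← hact (1, Zsqrtd.sqrtd) Zsqrtd.sqrtd, hker]
      refine ⟨-1, by ring, ?_⟩
      linear_combination (1 - Zsqrtd.sqrtd) * hd
    -- ι relation
    have h7 : mk (FreeGroup.of (Sum.inl
        (((1 : ZMod 2) * 1) ⊗ₜ[Zsqrtd 2] (2 * Zsqrtd.sqrtd - 1)))) = 1 := by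
      have h := key _ (Or.inr <| Or.inr <| Or.inr <| Or.inr <| Or.inr <| Or.inr
        ⟨2 * Zsqrtd.sqrtd - 1, 1, rfl⟩)
      rw [map_mul, map_inv, mul_inv_eq_one] at h
      rw [← h, ← hact2, h5]
    have ha : algebraMap (Zsqrtd 2) (ZMod 2) (2 * Zsqrtd.sqrtd - 1) = 1 := by
      rw [map_sub, map_mul, hs, mul_zero, map_one, zero_sub]
      decide
    have h11 : mk (FreeGroup.of (Sum.inl
        ((1 : ZMod 2) ⊗ₜ[Zsqrtd 2] (1 : Zsqrtd 2)))) = 1 := by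
      have e11 : ((1 : ZMod 2) * 1) ⊗ₜ[Zsqrtd 2] (2 * Zsqrtd.sqrtd - 1) =
          (1 : ZMod 2) ⊗ₜ[Zsqrtd 2] (1 : Zsqrtd 2) := by
        rw [one_mul, tm, ha]
      rw [← e11]; exact h7
    intro x
    rw [hof]
    induction x using TensorProduct.induction_on with
    | zero => exact z0
    | tmul e v =>
      rcases (by decide : ∀ e : ZMod 2, e = 0 ∨ e = 1) e with rfl | rfl
      · rw [TensorProduct.zero_tmul]; exact z0
      · rw [tm]
        rcases (by decide : ∀ c : ZMod 2, c = 0 ∨ c = 1)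
          (algebraMap (Zsqrtd 2) (ZMod 2) v) with hc | hc
        · rw [hc, TensorProduct.zero_tmul]; exact z0
        · rw [hc]; exact h11
    | add x y hx hy => rw [hadd, hx, hy, one_mul]
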